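/- For every real number a with |a| < 1 and every real number b, (1/(2π)) ∫₀^{2π} (1 − cos(b + ω)) / (1 − 2a·cos ω + a²) dω = (1 − a·cos b) / (1 − a²). -/

import Mathlib

open Real

theorem stmt_18 (a : ℝ) (ha : |a| < 1) (b : ℝ) :
    (1 / (2 * π)) * ∫ ω in (0:ℝ)..(2 * π),
        (1 - Real.cos (b + ω)) / (1 - 2 * a * Real.cos ω + a ^ 2)
    = (1 - a * Real.cos b) / (1 - a ^ 2) := by
  have hpi : (2 * π) ≠ 0 := by positivity
  rcases eq_or_ne a 0 with rfl | ha0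
  · simp only [mul_zero, zero_mul, ne_eq, OfNat.ofNat_ne_zero, not_false_eq_true, zero_pow,
      add_zero, sub_zero, div_one, one_mul]
    rw [intervalIntegral.integral_sub intervalIntegrable_const
      (by apply Continuous.intervalIntegrable; continuity)]
    have : ∫ ω in (0:ℝ)..(2*π), Real.cos (b + ω) = Real.sin (b + 2*π) - Real.sin (b + 0) := by
      rw [intervalIntegral.integral_comp_add_left (fun x => Real.cos x) b, integral_cos]
    rw [this]
    simp [Real.sin_add_two_pi]
    field_simp
  · -- a ≠ 0 case
    have hc : ∀ ω : ℝ, 0 < 1 - a * Real.cos ω := by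
      intro ω
      have h1 : |a * Real.cos ω| < 1 := by
        calc |a * Real.cos ω| = |a| * |Real.cos ω| := abs_mul _ _
        _ ≤ |a| * 1 := by nlinarith [abs_cos_le_one ω, abs_nonneg a]
        _ < 1 := by linarith
      have := abs_lt.1 h1
      linarith [this.2]
    have hD : ∀ ω : ℝ, 0 < 1 - 2 * a * Real.cos ω + a ^ 2 := by
      intro ω
      have hs := Real.sin_sq_add_cos_sq ω
      nlinarith [hc ω, sq_nonneg (a * Real.sin ω), sq_nonneg (1 - a * Real.cos ω)]
    have ha2 : (1 : ℝ) - a ^ 2 ≠ 0 := by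
      have : a ^ 2 < 1 := by nlinarith [abs_nonneg a, sq_abs a]
      linarith
    set G : ℝ → ℝ := fun ω => (1 - a * Real.cos b) / (1 - a ^ 2) *
        (ω + 2 * Real.arctan (a * Real.sin ω / (1 - a * Real.cos ω)))
      - (Real.cos b / a) * Real.arctan (a * Real.sin ω / (1 - a * Real.cos ω))
      + (Real.sin b / (2 * a)) * Real.log (1 - 2 * a * Real.cos ω + a ^ 2) with hGdef
    have hG : ∀ ω : ℝ, HasDerivAt G
        ((1 - Real.cos (b + ω)) / (1 - 2 * a * Real.cos ω + a ^ 2)) ω := by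
      intro ω
      have hs : Real.sin ω ^ 2 = 1 - Real.cos ω ^ 2 := by
        nlinarith [Real.sin_sq_add_cos_sq ω]
      have hcne := (hc ω).ne'
      have hDne := (hD ω).ne'
      have hu : HasDerivAt (fun ω => a * Real.sin ω / (1 - a * Real.cos ω))
          (((a * Real.cos ω) * (1 - a * Real.cos ω) - (a * Real.sin ω) * (a * Real.sin ω))
            / (1 - a * Real.cos ω) ^ 2) ω := by
        exact ((Real.hasDerivAt_sin ω).const_mul a).div
          ((((Real.hasDerivAt_cos ω).const_mul a).const_sub 1).congr_deriv (by ring)) hcne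
      have harctan : HasDerivAt (fun ω => Real.arctan (a * Real.sin ω / (1 - a * Real.cos ω)))
          ((a * Real.cos ω - a ^ 2) / (1 - 2 * a * Real.cos ω + a ^ 2)) ω := by
        have h := hu.arctan
        convert h using 1
        have h1u : 1 + (a * Real.sin ω / (1 - a * Real.cos ω)) ^ 2
            = (1 - 2 * a * Real.cos ω + a ^ 2) / (1 - a * Real.cos ω) ^ 2 := by
          field_simp
          linear_combination a ^ 2 * hs
        have hnum : (a * Real.cos ω) * (1 - a * Real.cos ω)
            - (a * Real.sin ω) * (a * Real.sin ω) = a * Real.cos ω - a ^ 2 := by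
          linear_combination (-a ^ 2) * hs
        rw [h1u, hnum]
        field_simp
      have hlog : HasDerivAt (fun ω => Real.log (1 - 2 * a * Real.cos ω + a ^ 2))
          ((2 * a * Real.sin ω) / (1 - 2 * a * Real.cos ω + a ^ 2)) ω := by
        have hDderiv : HasDerivAt (fun ω => 1 - 2 * a * Real.cos ω + a ^ 2)
            (2 * a * Real.sin ω) ω := by
          have := (((Real.hasDerivAt_cos ω).const_mul (2 * a)).const_sub 1).add_const (a ^ 2)
          exact this.congr_deriv (by ring)
        exact hDderiv.log hDne
      have hmain := ((((hasDerivAt_id ω).add (harctan.const_mul 2)).const_mul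
          ((1 - a * Real.cos b) / (1 - a ^ 2))).sub
            (harctan.const_mul (Real.cos b / a))).add
              (hlog.const_mul (Real.sin b / (2 * a)))
      refine hmain.congr_deriv ?_
      rw [Real.cos_add]
      generalize hDv : (1 - 2 * a * Real.cos ω + a ^ 2) = D at hDne ⊢
      field_simp
      rw [← hDv]
      ring
    have hint : IntervalIntegrable
        (fun ω => (1 - Real.cos (b + ω)) / (1 - 2 * a * Real.cos ω + a ^ 2))
        MeasureTheory.volume 0 (2 * π) := by
      apply Continuous.intervalIntegrable
      exact (continuous_const.sub (Real.continuous_cos.comp (continuous_const.add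
        continuous_id))).div (by continuity) (fun ω => (hD ω).ne')
    rw [intervalIntegral.integral_eq_sub_of_hasDerivAt (fun ω _ => hG ω) hint]
    have hsub : G (2 * π) - G 0 = (1 - a * Real.cos b) / (1 - a ^ 2) * (2 * π) := by
      simp only [hGdef, Real.sin_two_pi, Real.cos_two_pi, Real.sin_zero, Real.cos_zero,
        mul_zero, zero_div, Real.arctan_zero, mul_one]
      ring
    rw [hsub]
    field_simp
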